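/- Let H, K be Hilbert spaces, T : H → H a bounded self-adjoint operator, A : H → K a bounded operator, and c₀, c₁ > 0 with ⟪T v, v⟫ ≥ c₀ ‖v‖² + c₁ ‖A v‖² for all v ∈ H. Then T is invertible with bounded inverse and the composition A ∘ T⁻¹ satisfies ‖A ∘ T⁻¹‖ ≤ 1/√(c₀ c₁). -/

import Mathlib

theorem coercive_selfAdjoint_comp_inverse
    {𝕜 : Type*} [RCLike 𝕜] {H K : Type*} [NormedAddCommGroup H]
    [InnerProductSpace 𝕜 H] [CompleteSpace H]
    [NormedAddCommGroup K] [InnerProductSpace 𝕜 K] [CompleteSpace K]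
    (T : H →L[𝕜] H) (hT : IsSelfAdjoint T) (A : H →L[𝕜] K)
    (c₀ c₁ : ℝ) (hc₀ : 0 < c₀) (hc₁ : 0 < c₁)
    (hcoer : ∀ v : H,
      c₀ * ‖v‖ ^ 2 + c₁ * ‖A v‖ ^ 2 ≤ RCLike.re (inner 𝕜 (T v) v : 𝕜)) :
    ∃ S : H →L[𝕜] H, (∀ v, T (S v) = v) ∧ (∀ v, S (T v) = v) ∧
      ‖A.comp S‖ ≤ 1 / Real.sqrt (c₀ * c₁) := by
  -- Basic coercivity consequences
  have key : ∀ v : H, c₀ * ‖v‖ ^ 2 + c₁ * ‖A v‖ ^ 2 ≤ ‖T v‖ * ‖v‖ := by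
    intro v
    calc c₀ * ‖v‖ ^ 2 + c₁ * ‖A v‖ ^ 2 ≤ RCLike.re (inner 𝕜 (T v) v : 𝕜) := hcoer v
      _ ≤ ‖(inner 𝕜 (T v) v : 𝕜)‖ := RCLike.re_le_norm _
      _ ≤ ‖T v‖ * ‖v‖ := norm_inner_le_norm _ _
  have hbelow : ∀ v : H, c₀ * ‖v‖ ≤ ‖T v‖ := by
    intro v
    rcases eq_or_ne v 0 with rfl | hv
    · simp
    · have hv' : 0 < ‖v‖ := norm_pos_iff.mpr hv
      have h := key v
      nlinarith [sq_nonneg ‖A v‖, norm_nonneg (T v), mul_nonneg hc₁.le (sq_nonneg ‖A v‖)]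
  -- Injectivity
  have hker : LinearMap.ker (T : H →ₗ[𝕜] H) = ⊥ := by
    rw [LinearMap.ker_eq_bot']
    intro v hv
    have := hbelow v
    rw [show T v = 0 from hv] at this
    simp only [norm_zero] at this
    have : ‖v‖ ≤ 0 := by nlinarith
    exact norm_le_zero_iff.mp this
  -- Closed range
  have hanti : AntilipschitzWith (⟨c₀, hc₀.le⟩ : NNReal)⁻¹ T := by
    apply AddMonoidHomClass.antilipschitz_of_bound
    intro v
    show ‖v‖ ≤ c₀⁻¹ * ‖T v‖
    rw [le_inv_mul_iff₀ hc₀]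
    exact hbelow v
  have hclosed : IsClosed (LinearMap.range (T : H →ₗ[𝕜] H) : Set H) := by
    have h := hanti.isClosed_range T.uniformContinuous
    have heq : (LinearMap.range (T : H →ₗ[𝕜] H) : Set H) = Set.range T := by
      ext x
      simp [LinearMap.mem_range, Set.mem_range]
    rw [heq]
    exact h
  -- Dense range: orthogonal complement is trivial
  haveI : CompleteSpace (LinearMap.range (T : H →ₗ[𝕜] H) : Submodule 𝕜 H) :=
    hclosed.completeSpace_coe
  have horth : (LinearMap.range (T : H →ₗ[𝕜] H))ᗮ = ⊥ := by
    rw [Submodule.eq_bot_iff]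
    intro w hw
    have h0 : (inner 𝕜 (T w) w : 𝕜) = 0 :=
      hw (T w) (LinearMap.mem_range_self _ w)
    have := hcoer w
    rw [h0] at this
    simp only [map_zero] at this
    have hw0 : ‖w‖ ^ 2 ≤ 0 := by nlinarith [mul_nonneg hc₁.le (sq_nonneg ‖A w‖)]
    have : ‖w‖ = 0 := by nlinarith [sq_nonneg ‖w‖, norm_nonneg w]
    exact norm_eq_zero.mp this
  have hrange : LinearMap.range (T : H →ₗ[𝕜] H) = ⊤ :=
    Submodule.orthogonal_eq_bot_iff.mp horth
  -- the inverse
  let e := ContinuousLinearEquiv.ofBijective T hker hrange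
  refine ⟨e.symm.toContinuousLinearMap, ?_, ?_, ?_⟩
  · intro v
    exact ContinuousLinearEquiv.ofBijective_apply_symm_apply T hker hrange v
  · intro v
    exact ContinuousLinearEquiv.ofBijective_symm_apply_apply T hker hrange v
  · have hpos : 0 < Real.sqrt (c₀ * c₁) := Real.sqrt_pos.mpr (by positivity)
    apply ContinuousLinearMap.opNorm_le_bound _ (by positivity)
    intro v
    set u := e.symm v with hu
    have hTu : T u = v :=
      ContinuousLinearEquiv.ofBijective_apply_symm_apply T hker hrange v
    have h1 : c₀ * ‖u‖ ^ 2 + c₁ * ‖A u‖ ^ 2 ≤ ‖v‖ * ‖u‖ := by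
      have := key u
      rw [hTu] at this
      exact this
    have h2 : c₀ * c₁ * ‖A u‖ ^ 2 ≤ ‖v‖ ^ 2 := by
      nlinarith [sq_nonneg (c₀ * ‖u‖ - ‖v‖), mul_le_mul_of_nonneg_left h1 hc₀.le,
        mul_nonneg hc₀.le (mul_nonneg hc₁.le (sq_nonneg ‖A u‖)), sq_nonneg ‖v‖,
        mul_nonneg (mul_nonneg hc₀.le hc₀.le) (sq_nonneg ‖u‖)]
    have h3 : ‖A u‖ ≤ ‖v‖ / Real.sqrt (c₀ * c₁) := by
      have h4 : ‖A u‖ ^ 2 ≤ ‖v‖ ^ 2 / (c₀ * c₁) := by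
        rw [le_div_iff₀ (by positivity)]
        nlinarith [h2]
      calc ‖A u‖ = Real.sqrt (‖A u‖ ^ 2) := (Real.sqrt_sq (norm_nonneg _)).symm
        _ ≤ Real.sqrt (‖v‖ ^ 2 / (c₀ * c₁)) := Real.sqrt_le_sqrt h4
        _ = ‖v‖ / Real.sqrt (c₀ * c₁) := by
            rw [Real.sqrt_div (sq_nonneg _), Real.sqrt_sq (norm_nonneg _)]
    calc ‖(A.comp e.symm.toContinuousLinearMap) v‖ = ‖A u‖ := rfl
      _ ≤ ‖v‖ / Real.sqrt (c₀ * c₁) := h3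
      _ = 1 / Real.sqrt (c₀ * c₁) * ‖v‖ := by ring
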